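/- Let γ = [\overline{a₀; a₁, …, aₘ}] be a purely periodic continued fraction (all aᵢ positive integers) with quadratic irrational value γ, and let γ̄ be its Galois conjugate. Then −1/γ̄ = [\overline{aₘ; a_{m−1}, …, a₀}], the purely periodic continued fraction with reversed period. -/

import Mathlib

/-- Value of a finite continued fraction `[a₀; a₁, …, aₙ]` with real entries. -/
noncomputable def cfListVal : List ℝ → ℝ
  | [] => 0
  | [x] => x
  | x :: y :: t => x + 1 / cfListVal (y :: t)

/-- Value of the infinite continued fraction `[s 0; s 1, s 2, …]`. -/
noncomputable def cfVal (s : ℕ → ℝ) : ℝ :=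
  Filter.limUnder Filter.atTop (fun n => cfListVal ((List.range (n + 1)).map s))

/-- Value of the purely periodic continued fraction with period the list `l`. -/
noncomputable def perVal (l : List ℕ) : ℝ :=
  cfVal (fun n => (l.getD (n % l.length) 1 : ℝ))


namespace CFProof
open Filter Topology

/-- represents the 2×2 matrix `[[p, p'], [q, q']]` as `(p, p', q, q')`. -/
noncomputable def mp : List ℝ → ℝ × ℝ × ℝ × ℝ
  | [] => (1, 0, 0, 1)
  | a :: t => (a * (mp t).1 + (mp t).2.2.1, a * (mp t).2.1 + (mp t).2.2.2, (mp t).1, (mp t).2.1)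

lemma mp_cons (a : ℝ) (t : List ℝ) :
    mp (a :: t) = (a * (mp t).1 + (mp t).2.2.1, a * (mp t).2.1 + (mp t).2.2.2,
      (mp t).1, (mp t).2.1) := rfl

lemma mp_append (u v : List ℝ) :
    mp (u ++ v) = ((mp u).1 * (mp v).1 + (mp u).2.1 * (mp v).2.2.1,
      (mp u).1 * (mp v).2.1 + (mp u).2.1 * (mp v).2.2.2,
      (mp u).2.2.1 * (mp v).1 + (mp u).2.2.2 * (mp v).2.2.1,
      (mp u).2.2.1 * (mp v).2.1 + (mp u).2.2.2 * (mp v).2.2.2) := by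
  induction u with
  | nil => simp [mp]
  | cons a t ih =>
      simp only [List.cons_append, mp_cons, ih, Prod.mk.injEq]
      first
      | trivial
      | exact ⟨by ring, by ring, trivial⟩

lemma mp_reverse (u : List ℝ) :
    mp u.reverse = ((mp u).1, (mp u).2.2.1, (mp u).2.1, (mp u).2.2.2) := by
  induction u with
  | nil => simp [mp]
  | cons a t ih =>
      rw [List.reverse_cons, mp_append, ih]
      simp only [mp_cons, mp, Prod.mk.injEq]
      first
      | trivial
      | (and_intros <;> ring)

lemma mp_inv (u : List ℝ) (h : ∀ x ∈ u, 1 ≤ x) :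
    1 ≤ (mp u).1 ∧ 0 ≤ (mp u).2.1 ∧ 0 ≤ (mp u).2.2.1 ∧ 0 ≤ (mp u).2.2.2 ∧
      1 ≤ (mp u).2.2.1 + (mp u).2.2.2 := by
  induction u with
  | nil => simp [mp]
  | cons a t ih =>
      have ha : 1 ≤ a := h a (by simp)
      obtain ⟨h1, h2, h3, h4, h5⟩ := ih (fun x hx => h x (List.mem_cons_of_mem _ hx))
      simp only [mp_cons]
      refine ⟨?_, ?_, ?_, ?_, ?_⟩ <;> nlinarith

lemma mp_pos : ∀ (u : List ℝ), u ≠ [] → (∀ x ∈ u, 1 ≤ x) →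
    1 ≤ (mp u).2.1 ∧ 1 ≤ (mp u).2.2.1
  | [a], _, h => by simp [mp]
  | a :: b :: t, _, h => by
      have ha : 1 ≤ a := h a (by simp)
      obtain ⟨h1, h2⟩ := mp_pos (b :: t) (by simp) (fun x hx => h x (List.mem_cons_of_mem _ hx))
      obtain ⟨g1, g2, g3, g4, g5⟩ := mp_inv (b :: t) (fun x hx => h x (List.mem_cons_of_mem _ hx))
      rw [mp_cons]
      constructor
      · show 1 ≤ a * (mp (b :: t)).2.1 + (mp (b :: t)).2.2.2
        nlinarith
      · exact g1

lemma cfListVal_cons (a : ℝ) (w : List ℝ) (hw : w ≠ []) :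
    cfListVal (a :: w) = a + 1 / cfListVal w := by
  cases w with
  | nil => simp at hw
  | cons y t => rfl

lemma cfListVal_ge_one : ∀ (r : List ℝ), r ≠ [] → (∀ x ∈ r, 1 ≤ x) → 1 ≤ cfListVal r
  | [x], _, h => by simpa [cfListVal] using h x (by simp)
  | x :: y :: t, _, h => by
      have hx : 1 ≤ x := h x (by simp)
      have ih : 1 ≤ cfListVal (y :: t) :=
        cfListVal_ge_one (y :: t) (by simp) (fun z hz => h z (List.mem_cons_of_mem _ hz))
      rw [cfListVal_cons x (y :: t) (by simp)]
      have : 0 < 1 / cfListVal (y :: t) := by positivity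
      linarith

lemma cfListVal_append : ∀ (u : List ℝ), (∀ x ∈ u, 1 ≤ x) → ∀ (r : List ℝ), r ≠ [] →
    (∀ x ∈ r, 1 ≤ x) →
    cfListVal (u ++ r) = ((mp u).1 * cfListVal r + (mp u).2.1) /
      ((mp u).2.2.1 * cfListVal r + (mp u).2.2.2)
  | [], _, r, hr, hhr => by simp [mp]
  | a :: u, h, r, hr, hhr => by
      have hV : 1 ≤ cfListVal r := cfListVal_ge_one r hr hhr
      have hu : ∀ x ∈ u, 1 ≤ x := fun x hx => h x (List.mem_cons_of_mem _ hx)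
      have ih := cfListVal_append u hu r hr hhr
      obtain ⟨i1, i2, i3, i4, i5⟩ := mp_inv u hu
      have ha : 1 ≤ a := h a (by simp)
      have hden1 : 0 < (mp u).1 * cfListVal r + (mp u).2.1 := by nlinarith
      have hden2 : 0 < (mp u).2.2.1 * cfListVal r + (mp u).2.2.2 := by nlinarith
      have hne : u ++ r ≠ [] := by
        cases u <;> simp [hr]
      rw [List.cons_append, cfListVal_cons a _ hne, ih, mp_cons]
      simp only
      field_simp
      ring

lemma mp_det : ∀ (u : List ℝ),
    (mp u).1 * (mp u).2.2.2 - (mp u).2.1 * (mp u).2.2.1 = (-1) ^ u.length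
  | [] => by simp [mp]
  | a :: t => by
      have h := mp_det t
      simp only [mp_cons, List.length_cons, pow_succ]
      linear_combination (-1 : ℝ) * h



noncomputable def pfx (s : ℕ → ℝ) (n : ℕ) : List ℝ := (List.range n).map s

lemma pfx_succ (s : ℕ → ℝ) (n : ℕ) : pfx s (n + 1) = pfx s n ++ [s n] := by
  simp [pfx, List.range_succ]

lemma pfx_mem (s : ℕ → ℝ) (hs : ∀ n, 1 ≤ s n) (n : ℕ) : ∀ x ∈ pfx s n, 1 ≤ x := by
  intro x hx
  simp only [pfx, List.mem_map, List.mem_range] at hx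
  obtain ⟨i, _, rfl⟩ := hx
  exact hs i

lemma pfx_ne (s : ℕ → ℝ) (n : ℕ) : pfx s (n + 1) ≠ [] := by simp [pfx]

noncomputable def PP (s : ℕ → ℝ) (n : ℕ) : ℝ := (mp (pfx s n)).1
noncomputable def PP' (s : ℕ → ℝ) (n : ℕ) : ℝ := (mp (pfx s n)).2.1
noncomputable def QQ (s : ℕ → ℝ) (n : ℕ) : ℝ := (mp (pfx s n)).2.2.1
noncomputable def QQ' (s : ℕ → ℝ) (n : ℕ) : ℝ := (mp (pfx s n)).2.2.2

lemma mp_single (a : ℝ) : mp [a] = (a, 1, 1, 0) := by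
  rw [mp_cons]; simp [mp]

lemma PP_succ (s : ℕ → ℝ) (n : ℕ) : PP s (n + 1) = PP s n * s n + PP' s n := by
  simp [PP, PP', pfx_succ, mp_append, mp_single]

lemma PP'_succ (s : ℕ → ℝ) (n : ℕ) : PP' s (n + 1) = PP s n := by
  simp [PP, PP', pfx_succ, mp_append, mp_single]

lemma QQ_succ (s : ℕ → ℝ) (n : ℕ) : QQ s (n + 1) = QQ s n * s n + QQ' s n := by
  simp [QQ, QQ', pfx_succ, mp_append, mp_single]

lemma QQ'_succ (s : ℕ → ℝ) (n : ℕ) : QQ' s (n + 1) = QQ s n := by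
  simp [QQ, QQ', pfx_succ, mp_append, mp_single]

lemma QQ_zero (s : ℕ → ℝ) : QQ s 0 = 0 := by simp [QQ, pfx, mp]
lemma QQ'_zero (s : ℕ → ℝ) : QQ' s 0 = 1 := by simp [QQ', pfx, mp]

lemma QQ_nonneg (s : ℕ → ℝ) (hs : ∀ n, 1 ≤ s n) (n : ℕ) : 0 ≤ QQ s n :=
  (mp_inv _ (pfx_mem s hs n)).2.2.1
lemma QQ'_nonneg (s : ℕ → ℝ) (hs : ∀ n, 1 ≤ s n) (n : ℕ) : 0 ≤ QQ' s n :=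
  (mp_inv _ (pfx_mem s hs n)).2.2.2.1
lemma QQ_one (s : ℕ → ℝ) (hs : ∀ n, 1 ≤ s n) (n : ℕ) : 1 ≤ QQ s (n + 1) :=
  (mp_pos _ (pfx_ne s n) (pfx_mem s hs (n + 1))).2

lemma QQ_mono (s : ℕ → ℝ) (hs : ∀ n, 1 ≤ s n) (n : ℕ) : QQ s n ≤ QQ s (n + 1) := by
  rw [QQ_succ]
  nlinarith [hs n, QQ_nonneg s hs n, QQ'_nonneg s hs n]

lemma QQ_grow (s : ℕ → ℝ) (hs : ∀ n, 1 ≤ s n) (n : ℕ) : (n : ℝ) ≤ QQ s n + QQ' s n := by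
  induction n with
  | zero => simp [QQ_zero, QQ'_zero]
  | succ n ih =>
      rw [QQ_succ, QQ'_succ]
      push_cast
      cases n with
      | zero => simp [QQ_zero, QQ'_zero]
      | succ m =>
          have h1 : 1 ≤ QQ s (m + 1) := QQ_one s hs m
          nlinarith [hs (m + 1), QQ'_nonneg s hs (m + 1)]

lemma QQ_half (s : ℕ → ℝ) (hs : ∀ n, 1 ≤ s n) (n : ℕ) : (n : ℝ) / 2 ≤ QQ s n := by
  cases n with
  | zero => simp [QQ_zero]
  | succ m =>
      have h1 := QQ_grow s hs (m + 1)
      have h2 := QQ_mono s hs m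
      have h3 := QQ'_succ s m
      push_cast at h1 ⊢
      linarith [h3 ▸ h2]

noncomputable def xx (s : ℕ → ℝ) (n : ℕ) : ℝ := cfListVal (pfx s (n + 1))

lemma xx_ge_one (s : ℕ → ℝ) (hs : ∀ n, 1 ≤ s n) (n : ℕ) : 1 ≤ xx s n :=
  cfListVal_ge_one _ (pfx_ne s n) (pfx_mem s hs (n + 1))

lemma xx_eq (s : ℕ → ℝ) (hs : ∀ n, 1 ≤ s n) (n : ℕ) :
    xx s n = PP s (n + 1) / QQ s (n + 1) := by
  rw [xx, pfx_succ, cfListVal_append _ (pfx_mem s hs n) [s n] (by simp)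
    (by intro x hx; simp at hx; subst hx; exact hs n)]
  have hv : cfListVal [s n] = s n := rfl
  rw [hv, PP_succ, QQ_succ, PP, PP', QQ, QQ']

lemma det_pfx (s : ℕ → ℝ) (n : ℕ) :
    PP s n * QQ' s n - PP' s n * QQ s n = (-1) ^ n := by
  have h := mp_det (pfx s n)
  simpa [PP, PP', QQ, QQ', pfx] using h

lemma xx_dist (s : ℕ → ℝ) (hs : ∀ n, 1 ≤ s n) (n : ℕ) :
    dist (xx s n) (xx s (n + 1)) ≤ 4 / ((n : ℝ) + 1) ^ 2 := by
  have h1 : (1 : ℝ) ≤ QQ s (n + 1) := QQ_one s hs n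
  have h2 : (1 : ℝ) ≤ QQ s (n + 2) := QQ_one s hs (n + 1)
  have hhalf : ((n : ℝ) + 1) / 2 ≤ QQ s (n + 1) := by
    have := QQ_half s hs (n + 1)
    push_cast at this
    linarith
  have hmono : QQ s (n + 1) ≤ QQ s (n + 2) := QQ_mono s hs (n + 1)
  have hdet : PP s (n + 1) * QQ s (n + 2) - QQ s (n + 1) * PP s (n + 2) = (-1) ^ (n + 1) := by
    rw [PP_succ s (n + 1), QQ_succ s (n + 1)]
    linear_combination det_pfx s (n + 1)
  have hne1 : QQ s (n + 1) ≠ 0 := by linarith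
  have hne2 : QQ s (n + 2) ≠ 0 := by linarith
  rw [xx_eq s hs n, xx_eq s hs (n + 1), Real.dist_eq, div_sub_div _ _ hne1 hne2, hdet]
  rw [abs_div]
  have habs : |(-1 : ℝ) ^ (n + 1)| = 1 := by
    rw [abs_pow, abs_neg, abs_one, one_pow]
  rw [habs]
  have hpos : 0 < QQ s (n + 1) * QQ s (n + 2) := by nlinarith
  rw [abs_of_pos hpos, div_le_div_iff₀ hpos (by positivity)]
  have key : ((n : ℝ) + 1) / 2 * (((n : ℝ) + 1) / 2) ≤ QQ s (n + 1) * QQ s (n + 2) :=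
    mul_le_mul hhalf (le_trans hhalf hmono) (by positivity) (by linarith)
  nlinarith [key]

lemma summable_bound : Summable (fun n : ℕ => 4 / ((n : ℝ) + 1) ^ 2) := by
  have h1 : Summable (fun n : ℕ => 1 / ((n : ℝ)) ^ 2) := by
    rw [Real.summable_one_div_nat_pow]
    norm_num
  have h2 : Summable (fun n : ℕ => 1 / (((n + 1 : ℕ) : ℝ)) ^ 2) := by
    exact (summable_nat_add_iff (f := fun n : ℕ => 1 / ((n : ℝ)) ^ 2) 1).mpr h1
  have h3 := h2.mul_left 4
  refine h3.congr fun n => ?_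
  push_cast
  ring

lemma xx_tendsto (s : ℕ → ℝ) (hs : ∀ n, 1 ≤ s n) :
    ∃ γ : ℝ, 1 ≤ γ ∧ Filter.Tendsto (xx s) Filter.atTop (nhds γ) := by
  have hc : CauchySeq (xx s) :=
    cauchySeq_of_dist_le_of_summable _ (xx_dist s hs) summable_bound
  obtain ⟨γ, hγ⟩ := cauchySeq_tendsto_of_complete hc
  exact ⟨γ, ge_of_tendsto' hγ (fun n => xx_ge_one s hs n), hγ⟩

lemma mp_natCast : ∀ u : List ℕ, ∃ P P' Q Q' : ℕ,
    mp (u.map (Nat.cast : ℕ → ℝ)) = ((P : ℝ), (P' : ℝ), (Q : ℝ), (Q' : ℝ))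
  | [] => ⟨1, 0, 0, 1, by simp [mp]⟩
  | a :: t => by
      obtain ⟨P, P', Q, Q', h⟩ := mp_natCast t
      refine ⟨a * P + Q, a * P' + Q', P, P', ?_⟩
      rw [List.map_cons, mp_cons, h]
      push_cast
      rfl

lemma perVal_spec (l : List ℕ) (hl : l ≠ []) (hpos : ∀ x ∈ l, 1 ≤ x) :
    1 ≤ perVal l ∧
      perVal l * ((mp (l.map (Nat.cast : ℕ → ℝ))).2.2.1 * perVal l
          + (mp (l.map (Nat.cast : ℕ → ℝ))).2.2.2)
        = (mp (l.map (Nat.cast : ℕ → ℝ))).1 * perVal l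
          + (mp (l.map (Nat.cast : ℕ → ℝ))).2.1 := by
  set L := l.length with hLdef
  set s : ℕ → ℝ := fun n => (l.getD (n % l.length) 1 : ℝ) with hsdef
  have hL : 0 < L := List.length_pos_iff.mpr hl
  have hs : ∀ n, 1 ≤ s n := by
    intro n
    have hlt : n % L < L := Nat.mod_lt _ hL
    have hmem : l.getD (n % L) 1 ∈ l := by
      rw [List.getD_eq_getElem l 1 hlt]
      exact List.getElem_mem _
    have := hpos _ hmem
    show (1 : ℝ) ≤ (l.getD (n % l.length) 1 : ℝ)
    exact_mod_cast this
  obtain ⟨γ, hγ1, hγ⟩ := xx_tendsto s hs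
  have hpv : perVal l = γ := by
    have : (fun n => cfListVal ((List.range (n + 1)).map s)) = xx s := rfl
    rw [perVal, cfVal, this]
    exact hγ.limUnder_eq
  have hmem' : ∀ x ∈ l.map (Nat.cast : ℕ → ℝ), 1 ≤ x := by
    intro x hx
    simp only [List.mem_map] at hx
    obtain ⟨a, ha, rfl⟩ := hx
    exact_mod_cast hpos a ha
  have hpfxL : pfx s L = l.map (Nat.cast : ℕ → ℝ) := by
    apply List.ext_getElem
    · simp [pfx, hLdef]
    · intro i h1 h2
      have hiL : i < L := by simpa [pfx] using h1
      simp only [pfx, List.getElem_map, List.getElem_range]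
      rw [hsdef]
      simp only
      rw [Nat.mod_eq_of_lt hiL, List.getD_eq_getElem l 1 hiL]
  have hshift : ∀ k : ℕ, pfx s (L + (k + 1)) = l.map (Nat.cast : ℕ → ℝ) ++ pfx s (k + 1) := by
    intro k
    rw [pfx, List.range_add, List.map_append, List.map_map, ← hpfxL]
    congr 1
    apply List.map_congr_left
    intro x _
    show s (L + x) = s x
    rw [hsdef]
    simp only
    rw [Nat.add_mod_left]
  have hfix : ∀ k : ℕ, xx s (L + k) =
      ((mp (l.map (Nat.cast : ℕ → ℝ))).1 * xx s k + (mp (l.map (Nat.cast : ℕ → ℝ))).2.1) /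
        ((mp (l.map (Nat.cast : ℕ → ℝ))).2.2.1 * xx s k
          + (mp (l.map (Nat.cast : ℕ → ℝ))).2.2.2) := by
    intro k
    have he : xx s (L + k) = cfListVal (l.map (Nat.cast : ℕ → ℝ) ++ pfx s (k + 1)) := by
      rw [xx]
      congr 1
      rw [← hshift k, Nat.add_assoc]
    rw [he, cfListVal_append _ hmem' _ (pfx_ne s k) (pfx_mem s hs (k + 1))]
    rfl
  obtain ⟨g1, g2, g3, g4, g5⟩ := mp_inv (l.map (Nat.cast : ℕ → ℝ)) hmem'
  have hden : (mp (l.map (Nat.cast : ℕ → ℝ))).2.2.1 * γ + (mp (l.map (Nat.cast : ℕ → ℝ))).2.2.2 ≠ 0 := by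
    nlinarith
  have h1 : Filter.Tendsto (fun k => xx s (L + k)) Filter.atTop (nhds γ) := by
    have h := hγ.comp (Filter.tendsto_add_atTop_nat L)
    have he : (fun k => xx s (L + k)) = (xx s) ∘ (fun n => n + L) := by
      funext k
      simp [Function.comp, Nat.add_comm]
    rw [he]
    exact h
  have h2 : Filter.Tendsto (fun k =>
      ((mp (l.map (Nat.cast : ℕ → ℝ))).1 * xx s k + (mp (l.map (Nat.cast : ℕ → ℝ))).2.1) /
        ((mp (l.map (Nat.cast : ℕ → ℝ))).2.2.1 * xx s k
          + (mp (l.map (Nat.cast : ℕ → ℝ))).2.2.2)) Filter.atTop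
      (nhds (((mp (l.map (Nat.cast : ℕ → ℝ))).1 * γ + (mp (l.map (Nat.cast : ℕ → ℝ))).2.1) /
        ((mp (l.map (Nat.cast : ℕ → ℝ))).2.2.1 * γ
          + (mp (l.map (Nat.cast : ℕ → ℝ))).2.2.2))) := by
    exact ((tendsto_const_nhds.mul hγ).add tendsto_const_nhds).div
      ((tendsto_const_nhds.mul hγ).add tendsto_const_nhds) hden
  have h1' : Filter.Tendsto (fun k =>
      ((mp (l.map (Nat.cast : ℕ → ℝ))).1 * xx s k + (mp (l.map (Nat.cast : ℕ → ℝ))).2.1) /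
        ((mp (l.map (Nat.cast : ℕ → ℝ))).2.2.1 * xx s k
          + (mp (l.map (Nat.cast : ℕ → ℝ))).2.2.2)) Filter.atTop (nhds γ) := by
    refine h1.congr fun k => ?_
    exact hfix k
  have hkey : γ = ((mp (l.map (Nat.cast : ℕ → ℝ))).1 * γ + (mp (l.map (Nat.cast : ℕ → ℝ))).2.1) /
        ((mp (l.map (Nat.cast : ℕ → ℝ))).2.2.1 * γ
          + (mp (l.map (Nat.cast : ℕ → ℝ))).2.2.2) :=
    tendsto_nhds_unique h1' h2
  rw [hpv]
  refine ⟨hγ1, ?_⟩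
  rw [eq_div_iff hden] at hkey
  linarith [hkey]

end CFProof


/-- Galois: if `γ = [\overline{a₀; a₁, …, aₘ}]` is purely periodic (a quadratic
irrational) and `γ̄` is its Galois conjugate (characterized by `γ̄ ≠ γ`,
`γ + γ̄ ∈ ℚ`, `γ·γ̄ ∈ ℚ`), then `−1/γ̄ = [\overline{aₘ; a_{m−1}, …, a₀}]`. -/
theorem galois_reversed_period (l : List ℕ) (hl : l ≠ []) (hpos : ∀ x ∈ l, 1 ≤ x)
    (hirr : Irrational (perVal l)) (gbar : ℝ) (hne : gbar ≠ perVal l)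
    (hsum : ∃ s : ℚ, perVal l + gbar = (s : ℝ))
    (hprod : ∃ t : ℚ, perVal l * gbar = (t : ℝ)) :
    -1 / gbar = perVal l.reverse := by
  obtain ⟨P, P', Q, Q', hm⟩ := CFProof.mp_natCast l
  have hmem' : ∀ x ∈ l.map (Nat.cast : ℕ → ℝ), 1 ≤ x := by
    intro x hx
    simp only [List.mem_map] at hx
    obtain ⟨a, ha, rfl⟩ := hx
    exact_mod_cast hpos a ha
  obtain ⟨hγ1, hγeq⟩ := CFProof.perVal_spec l hl hpos
  obtain ⟨hδ1, hδeq⟩ := CFProof.perVal_spec l.reverse (by simpa using hl)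
    (fun x hx => hpos x (List.mem_reverse.mp hx))
  have hmapne : l.map (Nat.cast : ℕ → ℝ) ≠ [] := by simpa using hl
  obtain ⟨hP'1, hQ1⟩ := CFProof.mp_pos _ hmapne hmem'
  rw [hm] at hγeq hP'1 hQ1
  have hrev : CFProof.mp (l.reverse.map (Nat.cast : ℕ → ℝ))
      = ((P : ℝ), (Q : ℝ), (P' : ℝ), (Q' : ℝ)) := by
    rw [List.map_reverse, CFProof.mp_reverse, hm]
  rw [hrev] at hδeq
  set G := perVal l with hGdef
  set D := perVal l.reverse with hDdef
  obtain ⟨σ, hσ⟩ := hsum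
  obtain ⟨τ, hτ⟩ := hprod
  -- G satisfies Q G² + (Q'-P) G - P' = 0
  have hq : (Q : ℝ) * G ^ 2 + ((Q' : ℝ) - P) * G - P' = 0 := by
    simp only at hγeq
    linear_combination hγeq
  have hd : (P' : ℝ) * D ^ 2 + ((Q' : ℝ) - P) * D - Q = 0 := by
    simp only at hδeq
    linear_combination hδeq
  have h2 : G ^ 2 - (σ : ℝ) * G + τ = 0 := by linear_combination G * hσ - hτ
  have hc : (Q : ℝ) * σ + Q' - P = 0 := by
    by_contra hcne
    have hG : G = ((Q : ℝ) * τ + P') / ((Q : ℝ) * σ + Q' - P) := by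
      rw [eq_div_iff hcne]
      linear_combination hq - (Q : ℝ) * h2
    exact hirr ⟨((Q : ℚ) * τ + P') / ((Q : ℚ) * σ + Q' - P), by push_cast; rw [← hG]⟩
  have h5 : (Q : ℝ) * τ + P' = 0 := by
    linear_combination -hq + (Q : ℝ) * h2 + G * hc
  have hQ1' : (1 : ℝ) ≤ Q := hQ1
  have hP'1' : (1 : ℝ) ≤ P' := hP'1
  have hτneg : (τ : ℝ) < 0 := by nlinarith
  have hgbneg : gbar < 0 := by nlinarith [hτ]
  have hgbne : gbar ≠ 0 := ne_of_lt hgbneg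
  have hgbq : gbar ^ 2 - (σ : ℝ) * gbar + τ = 0 := by
    linear_combination h2 + (gbar - G) * hσ
  have hgq : (Q : ℝ) * gbar ^ 2 + ((Q' : ℝ) - P) * gbar - P' = 0 := by
    linear_combination (Q : ℝ) * hgbq + gbar * hc - h5
  have hx : (P' : ℝ) * (-1 / gbar) ^ 2 + ((Q' : ℝ) - P) * (-1 / gbar) - Q = 0 := by
    field_simp
    linear_combination (-1 : ℝ) * hgq
  have hxpos : 0 < -1 / gbar := by
    rw [div_pos_iff]
    right
    constructor <;> linarith
  have hfactor : ((-1 / gbar) - D) * ((P' : ℝ) * ((-1 / gbar) + D) + ((Q' : ℝ) - P)) = 0 := by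
    linear_combination hx - hd
  rcases mul_eq_zero.mp hfactor with h | h
  · linarith [h]
  · exfalso
    have h7 : (P' : ℝ) * (-1 / gbar) * D = -Q := by
      linear_combination -hx + (-1 / gbar) * h
    have hp : (0 : ℝ) < P' := by linarith
    have hD0 : (0 : ℝ) < D := by linarith
    have hposprod : 0 < (P' : ℝ) * (-1 / gbar) * D := mul_pos (mul_pos hp hxpos) hD0
    linarith [h7, hposprod, hQ1']
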